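/- Hoeffding's inequality for supermartingales: Let {X_n} be a supermartingale with respect to a filtration {F_n}, with X_0 a constant random variable, and suppose X_{n+1} − X_n ∈ [a_n, b_n] almost surely for all n, where each interval [a_n,b_n] has positive length. Then for all n ∈ ℕ and λ > 0, P(X_n − X_0 ≥ λ) ≤ exp(−2λ² / Σ_{k=1}^n (b_k − a_k)²). -/

import Mathlib

open Real

lemma myD_pos {p : ℝ} (hp0 : 0 ≤ p) (hp1 : p ≤ 1) (u : ℝ) : 0 < 1 - p + p * exp u := by
  rcases eq_or_lt_of_le hp0 with h | h
  · simp [← h]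
  · have := exp_pos u
    nlinarith

lemma myD_hasDeriv (p : ℝ) (u : ℝ) :
    HasDerivAt (fun u => 1 - p + p * exp u) (p * exp u) u :=
  ((Real.hasDerivAt_exp u).const_mul p).const_add (1 - p)

/-- derivative of F = p*u + u^2/8 - log D -/
lemma myF_hasDeriv {p : ℝ} (hp0 : 0 ≤ p) (hp1 : p ≤ 1) (u : ℝ) :
    HasDerivAt (fun u => p * u + u ^ 2 / 8 - Real.log (1 - p + p * exp u))
      (p + u / 4 - p * exp u / (1 - p + p * exp u)) u := by
  have h1 : HasDerivAt (fun u : ℝ => p * u + u ^ 2 / 8) (p + 2 * u / 8) u := by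
    have := ((hasDerivAt_id u).const_mul p).add
      (((hasDerivAt_id u).pow 2).div_const 8)
    refine this.congr_deriv ?_
    simp
  have h2 : HasDerivAt (fun u => Real.log (1 - p + p * exp u))
      (p * exp u / (1 - p + p * exp u)) u :=
    (myD_hasDeriv p u).log (myD_pos hp0 hp1 u).ne'
  have := h1.sub h2
  refine this.congr_deriv ?_
  ring

/-- derivative of g := p + u/4 - p e^u / D -/
lemma myg_hasDeriv {p : ℝ} (hp0 : 0 ≤ p) (hp1 : p ≤ 1) (u : ℝ) :
    HasDerivAt (fun u => p + u / 4 - p * exp u / (1 - p + p * exp u))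
      (1 / 4 - p * exp u * (1 - p) / (1 - p + p * exp u) ^ 2) u := by
  have hpos := myD_pos hp0 hp1 u
  have h1 : HasDerivAt (fun u : ℝ => p + u / 4) (1 / 4) u := by
    simpa using ((hasDerivAt_id u).div_const 4).const_add p
  have h2 : HasDerivAt (fun u => p * exp u / (1 - p + p * exp u))
      ((p * exp u * (1 - p + p * exp u) - p * exp u * (p * exp u)) /
        (1 - p + p * exp u) ^ 2) u :=
    ((Real.hasDerivAt_exp u).const_mul p).div (myD_hasDeriv p u) hpos.ne'
  have := h1.sub h2
  refine this.congr_deriv ?_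
  field_simp
  ring

lemma myg_nonneg {p : ℝ} (hp0 : 0 ≤ p) (hp1 : p ≤ 1) {u : ℝ} (hu : 0 ≤ u) :
    0 ≤ p + u / 4 - p * exp u / (1 - p + p * exp u) := by
  set g := fun u => p + u / 4 - p * exp u / (1 - p + p * exp u) with hg
  have hmono : Monotone g := by
    apply monotone_of_deriv_nonneg
    · exact fun u => (myg_hasDeriv hp0 hp1 u).differentiableAt
    · intro u
      rw [(myg_hasDeriv hp0 hp1 u).deriv]
      have hpos := myD_pos hp0 hp1 u
      have hq0 : 0 ≤ p * exp u := by positivity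
      have hq1 : p * exp u ≤ 1 - p + p * exp u := by linarith
      rw [sub_nonneg, div_le_iff₀ (by positivity)]
      nlinarith [sq_nonneg (1 - p + p * exp u - 2 * (p * exp u)), exp_pos u]
  have h0 : g 0 = 0 := by simp [hg]
  have := hmono hu
  rw [h0] at this
  exact this

lemma my_core {p : ℝ} (hp0 : 0 ≤ p) (hp1 : p ≤ 1) {u : ℝ} (hu : 0 ≤ u) :
    (1 - p) + p * exp u ≤ exp (p * u + u ^ 2 / 8) := by
  set F := fun u => p * u + u ^ 2 / 8 - Real.log (1 - p + p * exp u) with hF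
  have hmono : MonotoneOn F (Set.Ici 0) := by
    apply monotoneOn_of_deriv_nonneg (convex_Ici 0)
    · exact fun u _ => (myF_hasDeriv hp0 hp1 u).differentiableAt.continuousAt.continuousWithinAt
    · exact fun u _ => (myF_hasDeriv hp0 hp1 u).differentiableAt.differentiableWithinAt
    · intro u hu'
      rw [(myF_hasDeriv hp0 hp1 u).deriv]
      exact myg_nonneg hp0 hp1 (le_of_lt (by simpa using hu'))
  have h0 : F 0 = 0 := by simp [hF]
  have hFu : 0 ≤ F u := by
    have := hmono Set.self_mem_Ici (Set.mem_Ici.2 hu) hu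
    rwa [h0] at this
  have hpos := myD_pos hp0 hp1 u
  have : Real.log (1 - p + p * exp u) ≤ p * u + u ^ 2 / 8 := by
    simp only [hF] at hFu; linarith
  calc (1 - p) + p * exp u = exp (Real.log (1 - p + p * exp u)) := by
        rw [exp_log hpos]
    _ ≤ exp (p * u + u ^ 2 / 8) := exp_le_exp.2 this

lemma my_core' {p : ℝ} (hp1 : 1 ≤ p) {u : ℝ} (hu : 0 ≤ u) :
    (1 - p) + p * exp u ≤ exp (p * u) := by
  set H := fun u => exp (p * u) - p * exp u with hH
  have hmono : MonotoneOn H (Set.Ici 0) := by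
    apply monotoneOn_of_deriv_nonneg (convex_Ici 0)
    · exact Continuous.continuousOn (by continuity)
    · apply Differentiable.differentiableOn
      exact fun u => (((hasDerivAt_id u).const_mul p).exp.sub
        ((Real.hasDerivAt_exp u).const_mul p)).differentiableAt
    · intro u hu'
      have hd : HasDerivAt H (exp (p * u) * (p * 1) - p * exp u) u :=
        (((hasDerivAt_id u).const_mul p).exp).sub ((Real.hasDerivAt_exp u).const_mul p)
      rw [hd.deriv]
      have hu0 : 0 < u := by simpa using hu'
      have : exp u ≤ exp (p * u) := exp_le_exp.2 (by nlinarith)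
      nlinarith [exp_pos u]
  have h0 : H 0 = 1 - p := by simp [hH]
  have := hmono Set.self_mem_Ici (Set.mem_Ici.2 hu) hu
  rw [h0] at this
  simp only [hH] at this
  linarith

lemma my_key {p : ℝ} (hp0 : 0 ≤ p) {u : ℝ} (hu : 0 ≤ u) :
    (1 - p) + p * exp u ≤ exp (p * u + u ^ 2 / 8) := by
  rcases le_total p 1 with h | h
  · exact my_core hp0 h hu
  · exact (my_core' h hu).trans (exp_le_exp.2 (by nlinarith))

lemma my_hoeffding_fun {a b t : ℝ} (ha : a ≤ 0) (hab : a < b) (ht : 0 ≤ t) :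
    (b * exp (t * a) - a * exp (t * b)) / (b - a) ≤ exp (t ^ 2 * (b - a) ^ 2 / 8) := by
  have hba : 0 < b - a := by linarith
  set p := -a / (b - a) with hp
  set u := t * (b - a) with hu
  have hp0 : 0 ≤ p := div_nonneg (by linarith) hba.le
  have hu0 : 0 ≤ u := mul_nonneg ht hba.le
  have hkey := my_key hp0 hu0
  have he : exp (t * a) > 0 := exp_pos _
  have h1 : (b * exp (t * a) - a * exp (t * b)) / (b - a)
      = exp (t * a) * ((1 - p) + p * exp u) := by
    have : exp (t * b) = exp (t * a) * exp u := by
      rw [← exp_add]; congr 1; simp only [hu]; ring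
    rw [this, hp]
    field_simp
    ring
  have h2 : exp (t * a) * exp (p * u + u ^ 2 / 8) = exp (t ^ 2 * (b - a) ^ 2 / 8) := by
    rw [← exp_add]
    congr 1
    have hpu : p * u = -(t * a) := by
      simp only [hp, hu]; field_simp
    rw [hpu]
    simp only [hu]
    ring
  rw [h1, ← h2]
  exact mul_le_mul_of_nonneg_left hkey he.le

open MeasureTheory Filter

section Prob

variable {Ω : Type*} {m0 : MeasurableSpace Ω} {μ : Measure Ω} [IsProbabilityMeasure μ]
  {ℱ : Filtration ℕ m0} {X : ℕ → Ω → ℝ} {a b : ℕ → ℝ} {x0 : ℝ}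

/-- convexity bound for exp on an interval -/
lemma my_exp_le_line {a b t x : ℝ} (hab : a < b) (hx1 : a ≤ x) (hx2 : x ≤ b) :
    exp (t * x) ≤ ((b - x) * exp (t * a) + (x - a) * exp (t * b)) / (b - a) := by
  have hba : 0 < b - a := by linarith
  have hw1 : (0:ℝ) ≤ (b - x) / (b - a) := div_nonneg (by linarith) hba.le
  have hw2 : (0:ℝ) ≤ (x - a) / (b - a) := div_nonneg (by linarith) hba.le
  have hsum : (b - x) / (b - a) + (x - a) / (b - a) = 1 := by field_simp; ring
  have h := convexOn_exp.2 (Set.mem_univ (t * a)) (Set.mem_univ (t * b)) hw1 hw2 hsum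
  simp only [smul_eq_mul] at h
  have harg : (b - x) / (b - a) * (t * a) + (x - a) / (b - a) * (t * b) = t * x := by
    rw [div_mul_eq_mul_div, div_mul_eq_mul_div, ← add_div, div_eq_iff hba.ne']
    ring
  rw [harg] at h
  calc exp (t * x) ≤ (b - x) / (b - a) * exp (t * a) + (x - a) / (b - a) * exp (t * b) := h
    _ = ((b - x) * exp (t * a) + (x - a) * exp (t * b)) / (b - a) := by
        rw [div_mul_eq_mul_div, div_mul_eq_mul_div, ← add_div]

lemma my_condexp_diff_nonpos (hsm : Supermartingale X ℱ μ) (n : ℕ) :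
    μ[fun ω => X (n + 1) ω - X n ω|ℱ n] ≤ᵐ[μ] 0 := by
  have h1 : μ[fun ω => X (n + 1) ω - X n ω|ℱ n] =ᵐ[μ] μ[X (n + 1)|ℱ n] - μ[X n|ℱ n] :=
    condExp_sub (hsm.integrable (n + 1)) (hsm.integrable n) _
  have h2 : μ[X n|ℱ n] = X n :=
    condExp_of_stronglyMeasurable (ℱ.le n) (hsm.stronglyAdapted n) (hsm.integrable n)
  have h3 := hsm.condExp_ae_le (Nat.le_succ n)
  filter_upwards [h1, h3] with ω hω1 hω3
  rw [hω1, Pi.sub_apply, h2, Pi.zero_apply]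
  linarith

lemma my_a_nonpos (hsm : Supermartingale X ℱ μ)
    (hdiff : ∀ n, ∀ᵐ ω ∂μ, X (n + 1) ω - X n ω ∈ Set.Icc (a (n + 1)) (b (n + 1)))
    (n : ℕ) : a (n + 1) ≤ 0 := by
  have hint : Integrable (fun ω => X (n + 1) ω - X n ω) μ :=
    (hsm.integrable (n + 1)).sub (hsm.integrable n)
  have h1 : ∫ ω, (X (n + 1) ω - X n ω) ∂μ ≤ 0 := by
    rw [← integral_condExp (ℱ.le n) (f := fun ω => X (n + 1) ω - X n ω)]
    exact integral_nonpos_of_ae (my_condexp_diff_nonpos hsm n)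
  have h2 : a (n + 1) ≤ ∫ ω, (X (n + 1) ω - X n ω) ∂μ := by
    have : ∫ _ : Ω, a (n + 1) ∂μ = a (n + 1) := by simp
    rw [← this]
    refine integral_mono_ae (integrable_const _) hint ?_
    filter_upwards [hdiff n] with ω hω using hω.1
  linarith

/-- a.e. bound on `X n - X 0` -/
lemma my_bdd (hdiff : ∀ n, ∀ᵐ ω ∂μ, X (n + 1) ω - X n ω ∈ Set.Icc (a (n + 1)) (b (n + 1)))
    (n : ℕ) :
    ∀ᵐ ω ∂μ, |X n ω - X 0 ω| ≤ ∑ k ∈ Finset.range n, max |a (k + 1)| |b (k + 1)| := by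
  induction n with
  | zero => simp
  | succ n ih =>
    filter_upwards [ih, hdiff n] with ω hω1 hω2
    have h1 : |X (n + 1) ω - X n ω| ≤ max |a (n + 1)| |b (n + 1)| := by
      rw [abs_le]
      constructor
      · have := hω2.1
        have : -(max |a (n + 1)| |b (n + 1)|) ≤ a (n + 1) := by
          have := neg_abs_le (a (n + 1)); have := le_max_left |a (n + 1)| |b (n + 1)|; linarith
        linarith [hω2.1]
      · have : b (n + 1) ≤ max |a (n + 1)| |b (n + 1)| := le_trans (le_abs_self _)
          (le_max_right _ _)
        linarith [hω2.2]
    rw [Finset.sum_range_succ]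
    have : X (n + 1) ω - X 0 ω = (X n ω - X 0 ω) + (X (n + 1) ω - X n ω) := by ring
    rw [this]
    calc |(X n ω - X 0 ω) + (X (n + 1) ω - X n ω)|
        ≤ |X n ω - X 0 ω| + |X (n + 1) ω - X n ω| := abs_add_le _ _
      _ ≤ _ := by gcongr

lemma my_meas (hsm : Supermartingale X ℱ μ) (hX0 : ∀ ω, X 0 ω = x0) (t : ℝ) (n : ℕ) :
    StronglyMeasurable[ℱ n] fun ω => exp (t * (X n ω - X 0 ω)) := by
  have h0 : X 0 = fun _ => x0 := funext hX0
  have h1 : StronglyMeasurable[ℱ n] fun ω => t * (X n ω - X 0 ω) := by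
    rw [h0]
    exact (((hsm.stronglyAdapted n).sub stronglyMeasurable_const).const_mul t)
  exact Real.continuous_exp.comp_stronglyMeasurable h1

lemma my_int (hsm : Supermartingale X ℱ μ) (hX0 : ∀ ω, X 0 ω = x0)
    (hdiff : ∀ n, ∀ᵐ ω ∂μ, X (n + 1) ω - X n ω ∈ Set.Icc (a (n + 1)) (b (n + 1)))
    (t : ℝ) (n : ℕ) :
    Integrable (fun ω => exp (t * (X n ω - X 0 ω))) μ := by
  refine Integrable.mono'
    (integrable_const (exp (|t| * ∑ k ∈ Finset.range n, max |a (k + 1)| |b (k + 1)|)))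
    ((my_meas hsm hX0 t n).mono (ℱ.le n)).aestronglyMeasurable ?_
  filter_upwards [my_bdd hdiff n] with ω hω
  rw [Real.norm_eq_abs, abs_exp, exp_le_exp]
  calc t * (X n ω - X 0 ω) ≤ |t * (X n ω - X 0 ω)| := le_abs_self _
    _ = |t| * |X n ω - X 0 ω| := abs_mul _ _
    _ ≤ _ := by
        apply mul_le_mul_of_nonneg_left hω (abs_nonneg t)

/-- Main mgf bound by induction -/
lemma my_mgf_bound (hab : ∀ n, a n < b n) (hsm : Supermartingale X ℱ μ)
    (hX0 : ∀ ω, X 0 ω = x0)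
    (hdiff : ∀ n, ∀ᵐ ω ∂μ, X (n + 1) ω - X n ω ∈ Set.Icc (a (n + 1)) (b (n + 1)))
    {t : ℝ} (ht : 0 ≤ t) (n : ℕ) :
    ∫ ω, exp (t * (X n ω - X 0 ω)) ∂μ ≤
      exp (t ^ 2 * (∑ k ∈ Finset.Icc 1 n, (b k - a k) ^ 2) / 8) := by
  induction n with
  | zero =>
    simp only [sub_self, mul_zero, exp_zero, integral_const, measure_univ, ENNReal.toReal_one,
      smul_eq_mul, one_mul]
    have : (∑ k ∈ Finset.Icc 1 0, (b k - a k) ^ 2) = 0 := by simp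
    rw [this]
    simp [exp_nonneg]
  | succ n ih =>
    set a' := a (n + 1) with ha'
    set b' := b (n + 1) with hb'
    have hab' : a' < b' := hab (n + 1)
    have hba : (0:ℝ) < b' - a' := by linarith
    have ha0 : a' ≤ 0 := my_a_nonpos hsm hdiff n
    set α := (b' * exp (t * a') - a' * exp (t * b')) / (b' - a') with hα
    set β := (exp (t * b') - exp (t * a')) / (b' - a') with hβ
    have hβ0 : 0 ≤ β := by
      apply div_nonneg _ hba.le
      have : t * a' ≤ t * b' := by nlinarith
      have := exp_le_exp.2 this
      linarith
    set Y := fun ω => exp (t * (X n ω - X 0 ω)) with hY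
    set Δ := fun ω => X (n + 1) ω - X n ω with hΔ
    have hYint : Integrable Y μ := my_int hsm hX0 hdiff t n
    have hΔint : Integrable Δ μ := (hsm.integrable (n + 1)).sub (hsm.integrable n)
    set c := exp (|t| * ∑ k ∈ Finset.range n, max |a (k + 1)| |b (k + 1)|) with hc
    have hYbd : ∀ᵐ ω ∂μ, ‖Y ω‖ ≤ c := by
      filter_upwards [my_bdd hdiff n] with ω hω
      rw [Real.norm_eq_abs, abs_exp, exp_le_exp]
      calc t * (X n ω - X 0 ω) ≤ |t * (X n ω - X 0 ω)| := le_abs_self _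
        _ = |t| * |X n ω - X 0 ω| := abs_mul _ _
        _ ≤ _ := mul_le_mul_of_nonneg_left hω (abs_nonneg t)
    have hYmeas := my_meas hsm hX0 t n
    have hYΔint : Integrable (fun ω => Y ω * Δ ω) μ :=
      hΔint.bdd_mul (hYmeas.mono (ℱ.le n)).aestronglyMeasurable hYbd
    -- key: ∫ Y * Δ ≤ 0
    have key1 : ∫ ω, Y ω * Δ ω ∂μ ≤ 0 := by
      have hpull : μ[Y * Δ|ℱ n] =ᵐ[μ] Y * μ[Δ|ℱ n] :=
        condExp_stronglyMeasurable_mul_of_bound (ℱ.le n) hYmeas hΔint c hYbd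
      have heq : ∫ ω, Y ω * Δ ω ∂μ = ∫ ω, Y ω * (μ[Δ|ℱ n]) ω ∂μ := by
        calc ∫ ω, Y ω * Δ ω ∂μ = ∫ ω, (Y * Δ) ω ∂μ := rfl
          _ = ∫ ω, (μ[Y * Δ|ℱ n]) ω ∂μ := (integral_condExp (ℱ.le n)).symm
          _ = ∫ ω, (Y * μ[Δ|ℱ n]) ω ∂μ := integral_congr_ae hpull
          _ = ∫ ω, Y ω * (μ[Δ|ℱ n]) ω ∂μ := rfl
      rw [heq]
      apply integral_nonpos_of_ae
      have hcneg : μ[Δ|ℱ n] ≤ᵐ[μ] 0 := my_condexp_diff_nonpos hsm n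
      filter_upwards [hcneg] with ω hω
      exact mul_nonpos_of_nonneg_of_nonpos (exp_nonneg _) hω
    have hrhsint : Integrable (fun ω => α * Y ω + β * (Y ω * Δ ω)) μ :=
      (hYint.const_mul α).add (hYΔint.const_mul β)
    have hptwise : ∀ᵐ ω ∂μ,
        exp (t * (X (n + 1) ω - X 0 ω)) ≤ α * Y ω + β * (Y ω * Δ ω) := by
      filter_upwards [hdiff n] with ω hω
      have hsplit : exp (t * (X (n + 1) ω - X 0 ω)) = Y ω * exp (t * Δ ω) := by
        rw [hY, hΔ, ← exp_add]
        congr 1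
        ring
      have hconv : exp (t * Δ ω) ≤ α + β * Δ ω := by
        have h := my_exp_le_line (t := t) hab' hω.1 hω.2
        calc exp (t * Δ ω) ≤ ((b' - Δ ω) * exp (t * a') + (Δ ω - a') * exp (t * b')) / (b' - a') :=
              h
          _ = α + β * Δ ω := by rw [hα, hβ]; field_simp; ring
      have hY0 : 0 ≤ Y ω := exp_nonneg _
      calc exp (t * (X (n + 1) ω - X 0 ω)) = Y ω * exp (t * Δ ω) := hsplit
        _ ≤ Y ω * (α + β * Δ ω) := mul_le_mul_of_nonneg_left hconv hY0
        _ = α * Y ω + β * (Y ω * Δ ω) := by ring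
    have step1 : ∫ ω, exp (t * (X (n + 1) ω - X 0 ω)) ∂μ ≤ α * ∫ ω, Y ω ∂μ := by
      calc ∫ ω, exp (t * (X (n + 1) ω - X 0 ω)) ∂μ
          ≤ ∫ ω, (α * Y ω + β * (Y ω * Δ ω)) ∂μ :=
            integral_mono_ae (my_int hsm hX0 hdiff t (n + 1)) hrhsint hptwise
        _ = α * ∫ ω, Y ω ∂μ + β * ∫ ω, Y ω * Δ ω ∂μ := by
            rw [integral_add (hYint.const_mul α) (hYΔint.const_mul β),
              integral_const_mul, integral_const_mul]
        _ ≤ α * ∫ ω, Y ω ∂μ := by nlinarith [mul_nonpos_of_nonneg_of_nonpos hβ0 key1]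
    have hαle : α ≤ exp (t ^ 2 * (b' - a') ^ 2 / 8) := my_hoeffding_fun ha0 hab' ht
    have hY0int : 0 ≤ ∫ ω, Y ω ∂μ := integral_nonneg fun ω => exp_nonneg _
    have hSsucc : (∑ k ∈ Finset.Icc 1 (n + 1), (b k - a k) ^ 2) =
        (∑ k ∈ Finset.Icc 1 n, (b k - a k) ^ 2) + (b' - a') ^ 2 := by
      rw [ha', hb']
      exact Finset.sum_Icc_succ_top (Nat.one_le_iff_ne_zero.mpr (Nat.succ_ne_zero n)) _
    calc ∫ ω, exp (t * (X (n + 1) ω - X 0 ω)) ∂μ ≤ α * ∫ ω, Y ω ∂μ := step1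
      _ ≤ exp (t ^ 2 * (b' - a') ^ 2 / 8) * ∫ ω, Y ω ∂μ :=
          mul_le_mul_of_nonneg_right hαle hY0int
      _ ≤ exp (t ^ 2 * (b' - a') ^ 2 / 8) *
            exp (t ^ 2 * (∑ k ∈ Finset.Icc 1 n, (b k - a k) ^ 2) / 8) := by
          exact mul_le_mul_of_nonneg_left ih (exp_nonneg _)
      _ = exp (t ^ 2 * (∑ k ∈ Finset.Icc 1 (n + 1), (b k - a k) ^ 2) / 8) := by
          rw [← exp_add, hSsucc]
          congr 1
          ring

end Prob



open MeasureTheory Filter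

/-- Hoeffding's inequality for supermartingales: if `{X n}` is a supermartingale
with `X 0` constant and `X (n+1) - X n ∈ [a (n+1), b (n+1)]` a.s. for all `n` (each interval of
positive length), then for all `n` and `λ > 0`,
`P(X n - X 0 ≥ λ) ≤ exp (-2 λ² / ∑_{k=1}^n (b k - a k)²)`. -/
theorem stmt1 {Ω : Type*} {m0 : MeasurableSpace Ω} {μ : Measure Ω} [IsProbabilityMeasure μ]
    (ℱ : Filtration ℕ m0) (X : ℕ → Ω → ℝ) (a b : ℕ → ℝ) (x0 : ℝ)
    (hab : ∀ n, a n < b n)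
    (hsm : Supermartingale X ℱ μ)
    (hX0 : ∀ ω, X 0 ω = x0)
    (hdiff : ∀ n, ∀ᵐ ω ∂μ, X (n + 1) ω - X n ω ∈ Set.Icc (a (n + 1)) (b (n + 1))) :
    ∀ n : ℕ, ∀ lam : ℝ, 0 < lam →
      μ {ω | lam ≤ X n ω - X 0 ω} ≤
        ENNReal.ofReal
          (Real.exp (-(2 * lam ^ 2) / ∑ k ∈ Finset.Icc 1 n, (b k - a k) ^ 2)) := by
  intro n lam hlam
  rcases Nat.eq_zero_or_pos n with hn | hn
  · subst hn
    have hempty : {ω | lam ≤ X 0 ω - X 0 ω} = (∅ : Set Ω) := by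
      ext ω; simp; linarith
    rw [hempty]
    simp
  · set S := ∑ k ∈ Finset.Icc 1 n, (b k - a k) ^ 2 with hS
    have hSpos : 0 < S := by
      apply Finset.sum_pos
      · intro k _
        have hk := hab k
        have : 0 < b k - a k := by linarith
        positivity
      · exact ⟨1, Finset.mem_Icc.2 ⟨le_refl 1, hn⟩⟩
    set t := 4 * lam / S with htdef
    have ht : 0 < t := div_pos (by linarith) hSpos
    have hint := my_int hsm hX0 hdiff t n
    have hchern := ProbabilityTheory.measure_ge_le_exp_mul_mgf
      (X := fun ω => X n ω - X 0 ω) (μ := μ) lam ht.le hint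
    have hmgf : ProbabilityTheory.mgf (fun ω => X n ω - X 0 ω) μ t
        = ∫ ω, exp (t * (X n ω - X 0 ω)) ∂μ := rfl
    have hbound := my_mgf_bound hab hsm hX0 hdiff ht.le n
    have h2 : (μ {ω | lam ≤ X n ω - X 0 ω}).toReal ≤ exp (-(2 * lam ^ 2) / S) := by
      calc (μ {ω | lam ≤ X n ω - X 0 ω}).toReal
          ≤ exp (-t * lam) * ProbabilityTheory.mgf (fun ω => X n ω - X 0 ω) μ t := hchern
        _ ≤ exp (-t * lam) * exp (t ^ 2 * S / 8) := by
            rw [hmgf]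
            exact mul_le_mul_of_nonneg_left hbound (exp_nonneg _)
        _ = exp (-t * lam + t ^ 2 * S / 8) := (exp_add _ _).symm
        _ = exp (-(2 * lam ^ 2) / S) := by
            congr 1
            rw [htdef]
            field_simp
            ring
    calc μ {ω | lam ≤ X n ω - X 0 ω}
        = ENNReal.ofReal ((μ {ω | lam ≤ X n ω - X 0 ω}).toReal) :=
          (ENNReal.ofReal_toReal (measure_ne_top μ _)).symm
      _ ≤ ENNReal.ofReal (exp (-(2 * lam ^ 2) / S)) := ENNReal.ofReal_le_ofReal h2
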